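/- With the gl_3 decomposition above, the semisimplified bracket on the span of y_1 = [e_{11}], y_2 = [e_{11}+e_{22}+e_{33}] (even) and y_3 = [e_{12} ↦ -e_{13}], y_4 = [e_{31} ↦ e_{21}] (odd) satisfies: [y_1, y_2] = 0, [y_1, y_3] = y_3, [y_1, y_4] = -y_4, and [y_3, y_4] = y_2, where the odd-odd bracket is computed by the rule [x̄, ȳ] = -[x, y'] + [x', y] for Jordan strings x ↦ x' and y ↦ y'. In particular this Lie superalgebra is isomorphic to gl(1|1). -/

import Mathlib

/-- The elementary matrix `e_{ij}` in `gl_3`. -/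
noncomputable def Egl {K : Type*} [Field K] (i j : Fin 3) : Matrix (Fin 3) (Fin 3) K :=
  Matrix.single i j 1

/-- Structure constants of the semisimplified bracket on `y_1, ..., y_4`. -/
def gCoef (K : Type*) [Field K] : Fin 4 → Fin 4 → (Fin 4 → K) := fun i j =>
  if i = 0 ∧ j = 2 then Pi.single 2 1
  else if i = 2 ∧ j = 0 then -Pi.single 2 1
  else if i = 0 ∧ j = 3 then -Pi.single 3 1
  else if i = 3 ∧ j = 0 then Pi.single 3 1
  else if i = 2 ∧ j = 3 then Pi.single 1 1
  else if i = 3 ∧ j = 2 then Pi.single 1 1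
  else 0

/-- The bilinear bracket on `K^4` determined by the structure constants `gCoef`. -/
noncomputable def gBracket (K : Type*) [Field K] :
    (Fin 4 → K) →ₗ[K] (Fin 4 → K) →ₗ[K] (Fin 4 → K) :=
  (Pi.basisFun K (Fin 4)).constr K fun i => (Pi.basisFun K (Fin 4)).constr K fun j => gCoef K i j

/-- The odd (off-diagonal) part of a `2 × 2` matrix. -/
def oddPart {K : Type*} [Field K] (M : Matrix (Fin 2) (Fin 2) K) : Matrix (Fin 2) (Fin 2) K :=
  M - Matrix.diagonal fun i => M i i

/-- The super bracket `[a,b] = ab - (-1)^{|a||b|} ba` of `gl(1|1)`. -/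
def glBracket {K : Type*} [Field K] (a b : Matrix (Fin 2) (Fin 2) K) :
    Matrix (Fin 2) (Fin 2) K :=
  a * b - b * a + (2 : K) • (oddPart b * oddPart a)

lemma gBracket_apply {K : Type*} [Field K] (x y : Fin 4 → K) :
    gBracket K x y =
      ![0, x 2 * y 3 + x 3 * y 2, x 0 * y 2 - x 2 * y 0, x 3 * y 0 - x 0 * y 3] := by
  have h : ∀ (f : Fin 4 → Fin 4 → K) (z : Fin 4 → K),
      ((Pi.basisFun K (Fin 4)).constr K f) z = ∑ i, z i • f i := by
    intro f z
    rw [Module.Basis.constr_apply_fintype]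
    simp
  rw [show gBracket K x = ∑ i, x i • ((Pi.basisFun K (Fin 4)).constr K fun j => gCoef K i j) from by
    rw [gBracket, Module.Basis.constr_apply_fintype]; simp]
  simp only [LinearMap.sum_apply, LinearMap.smul_apply, h, gCoef]
  funext k
  fin_cases k <;>
    simp [Fin.sum_univ_four, Pi.single_apply] <;> ring

lemma oddPart_fin2 {K : Type*} [Field K] (a b c d : K) :
    oddPart !![a, b; c, d] = !![0, b; c, 0] := by
  ext i j
  fin_cases i <;> fin_cases j <;>
    simp [oddPart, Matrix.diagonal, Matrix.sub_apply]

/-- The explicit linear equivalence `K^4 ≃ gl(1|1)`. -/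
noncomputable def phiEquiv (K : Type*) [Field K] : (Fin 4 → K) ≃ₗ[K] Matrix (Fin 2) (Fin 2) K where
  toFun x := !![x 0 + x 1, x 2; x 3, x 1]
  invFun M := ![M 0 0 - M 1 1, M 1 1, M 0 1, M 1 0]
  map_add' x y := by ext i j; fin_cases i <;> fin_cases j <;> simp <;> ring
  map_smul' c x := by ext i j; fin_cases i <;> fin_cases j <;> simp [mul_add]
  left_inv x := by funext k; fin_cases k <;> simp
  right_inv M := by ext i j; fin_cases i <;> fin_cases j <;> simp

lemma phiEquiv_bracket {K : Type*} [Field K] (x y : Fin 4 → K) :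
    phiEquiv K (gBracket K x y) = glBracket (phiEquiv K x) (phiEquiv K y) := by
  rw [gBracket_apply]
  show !![_, _; _, _] = glBracket !![_,_;_,_] !![_,_;_,_]
  rw [glBracket, oddPart_fin2, oddPart_fin2]
  ext i j
  fin_cases i <;> fin_cases j <;>
    simp [Matrix.mul_apply, Fin.sum_univ_two, Matrix.sub_apply, Matrix.add_apply,
      Matrix.smul_apply, smul_eq_mul] <;> ring

/-- For the semisimplification of `gl_3` in characteristic 3 with respect to `d = ad(e_{23})`,
with `y_1 = [e_{11}]`, `y_2 = [e_{11}+e_{22}+e_{33}]` even and `y_3 = [e_{12} ↦ -e_{13}]`,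
`y_4 = [e_{31} ↦ e_{21}]` odd, the semisimplified brackets are `[y_1,y_2] = 0`,
`[y_1,y_3] = y_3`, `[y_1,y_4] = -y_4` and `[y_3,y_4] = y_2` (the odd-odd bracket being
computed by the rule `[x̄,ȳ] = -[x,y'] + [x',y]`); these are witnessed by the displayed
identities in `gl_3` (0-based indices).  In particular the resulting Lie superalgebra,
which has exactly these structure constants, is isomorphic to `gl(1|1)`. -/
theorem stmt8 {K : Type*} [Field K] [IsAlgClosed K] [CharP K 3] :
    (⁅(Egl 0 0 : Matrix (Fin 3) (Fin 3) K), (1 : Matrix (Fin 3) (Fin 3) K)⁆ =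
      (0 : Matrix (Fin 3) (Fin 3) K)) ∧
    (⁅(Egl 0 0 : Matrix (Fin 3) (Fin 3) K), Egl 0 1⁆ = (Egl 0 1 : Matrix (Fin 3) (Fin 3) K)) ∧
    (⁅(Egl 0 0 : Matrix (Fin 3) (Fin 3) K), -Egl 0 2⁆ =
      (-Egl 0 2 : Matrix (Fin 3) (Fin 3) K)) ∧
    (⁅(Egl 0 0 : Matrix (Fin 3) (Fin 3) K), Egl 2 0⁆ = (-Egl 2 0 : Matrix (Fin 3) (Fin 3) K)) ∧
    (⁅(Egl 0 0 : Matrix (Fin 3) (Fin 3) K), Egl 1 0⁆ = (-Egl 1 0 : Matrix (Fin 3) (Fin 3) K)) ∧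
    (-⁅(Egl 0 1 : Matrix (Fin 3) (Fin 3) K), Egl 1 0⁆ + ⁅(-Egl 0 2 : Matrix (Fin 3) (Fin 3) K),
        Egl 2 0⁆ = (1 : Matrix (Fin 3) (Fin 3) K)) ∧
    (∃ φ : (Fin 4 → K) ≃ₗ[K] Matrix (Fin 2) (Fin 2) K,
      (∀ x y : Fin 4 → K, φ (gBracket K x y) = glBracket (φ x) (φ y)) ∧
      Submodule.map (φ : (Fin 4 → K) →ₗ[K] Matrix (Fin 2) (Fin 2) K)
          (Submodule.span K {Pi.single 0 1, Pi.single 1 1}) =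
        Submodule.span K {Matrix.single 0 0 (1 : K), Matrix.single 1 1 1} ∧
      Submodule.map (φ : (Fin 4 → K) →ₗ[K] Matrix (Fin 2) (Fin 2) K)
          (Submodule.span K {Pi.single 2 1, Pi.single 3 1}) =
        Submodule.span K {Matrix.single 0 1 (1 : K), Matrix.single 1 0 1}) := by
  have h3 : (3 : K) = 0 := by exact_mod_cast CharP.cast_eq_zero K 3
  refine ⟨?_, ?_, ?_, ?_, ?_, ?_, ?_⟩
  · ext i j
    fin_cases i <;> fin_cases j <;>
      simp [Ring.lie_def, Egl, Matrix.mul_apply, Matrix.single, Fin.sum_univ_three,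
        Matrix.sub_apply, Matrix.one_apply]
  · ext i j
    fin_cases i <;> fin_cases j <;>
      simp [Ring.lie_def, Egl, Matrix.mul_apply, Matrix.single, Fin.sum_univ_three,
        Matrix.sub_apply]
  · ext i j
    fin_cases i <;> fin_cases j <;>
      simp [Ring.lie_def, Egl, Matrix.mul_apply, Matrix.single, Fin.sum_univ_three,
        Matrix.sub_apply, Matrix.neg_apply]
  · ext i j
    fin_cases i <;> fin_cases j <;>
      simp [Ring.lie_def, Egl, Matrix.mul_apply, Matrix.single, Fin.sum_univ_three,
        Matrix.sub_apply, Matrix.neg_apply]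
  · ext i j
    fin_cases i <;> fin_cases j <;>
      simp [Ring.lie_def, Egl, Matrix.mul_apply, Matrix.single, Fin.sum_univ_three,
        Matrix.sub_apply, Matrix.neg_apply]
  · ext i j
    fin_cases i <;> fin_cases j <;>
      simp [Ring.lie_def, Egl, Matrix.mul_apply, Matrix.single, Fin.sum_univ_three,
        Matrix.sub_apply, Matrix.add_apply, Matrix.neg_apply, Matrix.one_apply] <;>
      (first
        | linear_combination h3
        | linear_combination -2*h3
        | linear_combination 2*h3
        | linear_combination -h3
        | linear_combination -3*h3
        | linear_combination 3*h3)
  · refine ⟨phiEquiv K, phiEquiv_bracket, ?_, ?_⟩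
    · have e00 : Matrix.single 0 0 (1 : K) = !![1, 0; 0, 0] := by
        ext i j; fin_cases i <;> fin_cases j <;> simp [Matrix.single]
      have e11 : Matrix.single 1 1 (1 : K) = !![0, 0; 0, 1] := by
        ext i j; fin_cases i <;> fin_cases j <;> simp [Matrix.single]
      have h0 : phiEquiv K (Pi.single 0 1) = !![1, 0; 0, 0] := by
        show !![_,_;_,_] = _
        ext i j
        fin_cases i <;> fin_cases j <;> simp [Pi.single_apply]
      have h1 : phiEquiv K (Pi.single 1 1) = !![1, 0; 0, 1] := by
        show !![_,_;_,_] = _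
        ext i j
        fin_cases i <;> fin_cases j <;> simp [Pi.single_apply]
      rw [Submodule.map_span, Set.image_insert_eq, Set.image_singleton]
      simp only [LinearEquiv.coe_coe]
      rw [h0, h1, e00, e11]
      apply le_antisymm <;> rw [Submodule.span_le] <;> rintro m (rfl | rfl)
      · exact Submodule.subset_span (Set.mem_insert _ _)
      · have : (!![1, 0; 0, 1] : Matrix (Fin 2) (Fin 2) K) = !![1, 0; 0, 0] + !![0, 0; 0, 1] := by
          ext i j; fin_cases i <;> fin_cases j <;> simp
        rw [this]
        exact Submodule.add_mem _ (Submodule.subset_span (Set.mem_insert _ _))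
          (Submodule.subset_span (Set.mem_insert_of_mem _ rfl))
      · exact Submodule.subset_span (Set.mem_insert _ _)
      · have : (!![0, 0; 0, 1] : Matrix (Fin 2) (Fin 2) K) = !![1, 0; 0, 1] - !![1, 0; 0, 0] := by
          ext i j; fin_cases i <;> fin_cases j <;> simp
        rw [this]
        exact Submodule.sub_mem _ (Submodule.subset_span (Set.mem_insert_of_mem _ rfl))
          (Submodule.subset_span (Set.mem_insert _ _))
    · have e01 : Matrix.single 0 1 (1 : K) = !![0, 1; 0, 0] := by
        ext i j; fin_cases i <;> fin_cases j <;> simp [Matrix.single]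
      have e10 : Matrix.single 1 0 (1 : K) = !![0, 0; 1, 0] := by
        ext i j; fin_cases i <;> fin_cases j <;> simp [Matrix.single]
      have h2 : phiEquiv K (Pi.single 2 1) = !![0, 1; 0, 0] := by
        show !![_,_;_,_] = _
        ext i j
        fin_cases i <;> fin_cases j <;> simp [Pi.single_apply]
      have h3' : phiEquiv K (Pi.single 3 1) = !![0, 0; 1, 0] := by
        show !![_,_;_,_] = _
        ext i j
        fin_cases i <;> fin_cases j <;> simp [Pi.single_apply]
      rw [Submodule.map_span, Set.image_insert_eq, Set.image_singleton]
      simp only [LinearEquiv.coe_coe]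
      rw [h2, h3', e01, e10]
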